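/- Let M be the bounded measurable functions ℝⁿ → [0,1] with sup metric, V(f) := G∘(K∗f) with G bounded Lipschitz and K ∈ L¹, and X_t(f) := [f + t·V(f)]_0^1. If F : M × [0,∞) → M is a flow forward tangent to X (i.e., lim_{h→0⁺} d_∞(F_{t+h}(f), X_h(F_t(f)))/h = 0), then writing f_t := F_t(f₀), for every x ∈ ℝⁿ and t ≥ 0 the pointwise forward derivative satisfies: d/dt⁺ f_t(x) = G((K∗f_t)(x)) if 0 < f_t(x) < 1; d/dt⁺ f_t(x) = min(G((K∗f_t)(x)), 0) if f_t(x) = 1; and d/dt⁺ f_t(x) = max(G((K∗f_t)(x)), 0) if f_t(x) = 0. -/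

import Mathlib

open MeasureTheory Filter Topology

noncomputable def clip (a b x : ℝ) : ℝ := min (max a x) b

noncomputable def conv {n : ℕ} (K f : (Fin n → ℝ) → ℝ) (x : Fin n → ℝ) : ℝ :=
  ∫ y, K (x - y) * f y

/-- The Lenia arc field `X_t(f) = [f + t·G(K∗f)]₀¹`. -/
noncomputable def leniaX {n : ℕ} (G : ℝ → ℝ) (K : (Fin n → ℝ) → ℝ)
    (t : ℝ) (f : (Fin n → ℝ) → ℝ) (x : Fin n → ℝ) : ℝ :=
  clip 0 1 (f x + t * G (conv K f x))

theorem lenia_forward_derivative {n : ℕ} (G : ℝ → ℝ) (K : (Fin n → ℝ) → ℝ)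
    (hK : Integrable K) (g CG : ℝ) (hGb : ∀ u, |G u| ≤ g)
    (hGL : ∀ u v, |G u - G v| ≤ CG * |u - v|)
    (F : ℝ → (Fin n → ℝ) → ℝ)
    (hF01 : ∀ t, 0 ≤ t → ∀ x, F t x ∈ Set.Icc (0:ℝ) 1)
    (hFmeas : ∀ t, 0 ≤ t → Measurable (F t))
    (htangent : ∀ t, 0 ≤ t →
      Tendsto (fun h : ℝ => (⨆ x, |F (t + h) x - leniaX G K h (F t) x|) / h)
        (𝓝[>] 0) (𝓝 0)) :
    ∀ x, ∀ t, 0 ≤ t →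
      ((0 < F t x → F t x < 1 →
        Tendsto (fun h : ℝ => (F (t + h) x - F t x) / h) (𝓝[>] 0)
          (𝓝 (G (conv K (F t) x)))) ∧
      (F t x = 1 →
        Tendsto (fun h : ℝ => (F (t + h) x - F t x) / h) (𝓝[>] 0)
          (𝓝 (min (G (conv K (F t) x)) 0))) ∧
      (F t x = 0 →
        Tendsto (fun h : ℝ => (F (t + h) x - F t x) / h) (𝓝[>] 0)
          (𝓝 (max (G (conv K (F t) x)) 0)))) := by
  intro x t ht
  set c := F t x with hc
  set v := G (conv K (F t) x) with hv
  have hcmem : c ∈ Set.Icc (0:ℝ) 1 := hF01 t ht x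
  have hbdd : ∀ h : ℝ, 0 < h →
      BddAbove (Set.range fun y => |F (t + h) y - leniaX G K h (F t) y|) := by
    intro h hh
    refine ⟨2, ?_⟩
    rintro _ ⟨y, rfl⟩
    have h1 := hF01 (t + h) (by linarith) y
    have h2 : leniaX G K h (F t) y ∈ Set.Icc (0:ℝ) 1 := by
      unfold leniaX clip
      exact ⟨le_min (le_max_left _ _) one_pos.le, min_le_right _ _⟩
    obtain ⟨ha1, ha2⟩ := h1
    obtain ⟨hb1, hb2⟩ := h2
    rw [abs_sub_le_iff]
    constructor <;> linarith
  have herr : Tendsto (fun h : ℝ => (F (t + h) x - leniaX G K h (F t) x) / h)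
      (𝓝[>] 0) (𝓝 0) := by
    apply squeeze_zero_norm' ?_ (htangent t ht)
    filter_upwards [self_mem_nhdsWithin] with h (hh : (0:ℝ) < h)
    rw [Real.norm_eq_abs, abs_div, abs_of_pos hh]
    exact div_le_div_of_nonneg_right (le_ciSup (hbdd h hh) x) hh.le
  have key : ∀ L : ℝ, (∀ᶠ h in 𝓝[>] (0:ℝ), (leniaX G K h (F t) x - c) / h = L) →
      Tendsto (fun h : ℝ => (F (t + h) x - c) / h) (𝓝[>] 0) (𝓝 L) := by
    intro L hL
    have h2 : Tendsto (fun h : ℝ => (F (t + h) x - leniaX G K h (F t) x) / h + L)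
        (𝓝[>] 0) (𝓝 (0 + L)) := herr.add tendsto_const_nhds
    rw [zero_add] at h2
    refine h2.congr' ?_
    filter_upwards [hL, self_mem_nhdsWithin] with h hL' (hh : (0:ℝ) < h)
    rw [← hL', ← add_div]
    ring_nf
  have hlen : ∀ h : ℝ, leniaX G K h (F t) x = clip 0 1 (c + h * v) := fun h => rfl
  have habs : ∀ h : ℝ, 0 < h → h < 1 / (|v| + 1) → |h * v| < 1 := by
    intro h hh hlt
    have hv1 : (0:ℝ) < |v| + 1 := by positivity
    rw [abs_mul, abs_of_pos hh]
    calc h * |v| ≤ h * (|v| + 1) := by nlinarith [abs_nonneg v]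
      _ < 1 := by
        rw [lt_div_iff₀ hv1] at hlt
        linarith
  refine ⟨?_, ?_, ?_⟩
  · intro hc0 hc1
    apply key
    have hδ : (0:ℝ) < min c (1 - c) / (|v| + 1) := by
      have : (0:ℝ) < min c (1 - c) := lt_min hc0 (by linarith)
      positivity
    filter_upwards [Ioo_mem_nhdsGT_of_mem (Set.mem_Ico.mpr ⟨le_refl (0:ℝ), hδ⟩)]
      with h hmem
    obtain ⟨hh, hlt⟩ := hmem
    have hv1 : (0:ℝ) < |v| + 1 := by positivity
    have hbound : |h * v| < min c (1 - c) := by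
      rw [lt_div_iff₀ hv1] at hlt
      rw [abs_mul, abs_of_pos hh]
      nlinarith [abs_nonneg v]
    have hb1 : h * v ≤ |h * v| := le_abs_self _
    have hb2 : -|h * v| ≤ h * v := neg_abs_le _
    have hm1 : |h * v| < c := lt_of_lt_of_le hbound (min_le_left _ _)
    have hm2 : |h * v| < 1 - c := lt_of_lt_of_le hbound (min_le_right _ _)
    rw [hlen, clip, max_eq_right (by linarith), min_eq_left (by linarith)]
    field_simp
    ring
  · intro hc1
    apply key
    have hδ : (0:ℝ) < 1 / (|v| + 1) := by positivity
    filter_upwards [Ioo_mem_nhdsGT_of_mem (Set.mem_Ico.mpr ⟨le_refl (0:ℝ), hδ⟩)]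
      with h hmem
    obtain ⟨hh, hlt⟩ := hmem
    have h1 := habs h hh hlt
    have hb2 : -|h * v| ≤ h * v := neg_abs_le _
    rw [hlen, hc1, clip, max_eq_right (by linarith)]
    rcases le_or_gt v 0 with hv0 | hv0
    · have : h * v ≤ 0 := mul_nonpos_of_nonneg_of_nonpos hh.le hv0
      rw [min_eq_left (by linarith), min_eq_left hv0]
      field_simp
      ring
    · have : 0 ≤ h * v := le_of_lt (mul_pos hh hv0)
      rw [min_eq_right (by linarith), min_eq_right hv0.le]
      simp
  · intro hc0
    apply key
    have hδ : (0:ℝ) < 1 / (|v| + 1) := by positivity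
    filter_upwards [Ioo_mem_nhdsGT_of_mem (Set.mem_Ico.mpr ⟨le_refl (0:ℝ), hδ⟩)]
      with h hmem
    obtain ⟨hh, hlt⟩ := hmem
    have h1 := habs h hh hlt
    have hb1 : h * v ≤ |h * v| := le_abs_self _
    rw [hlen, hc0, clip, zero_add]
    rcases le_or_gt v 0 with hv0 | hv0
    · have : h * v ≤ 0 := mul_nonpos_of_nonneg_of_nonpos hh.le hv0
      rw [max_eq_left this, min_eq_left (by norm_num : (0:ℝ) ≤ 1), max_eq_right hv0]
      simp
    · have hp : 0 ≤ h * v := le_of_lt (mul_pos hh hv0)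
      rw [max_eq_right hp, min_eq_left (by linarith), max_eq_left hv0.le]
      field_simp
      ring
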